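/- Let X be a nonempty zero-dimensional T1 space. Then X is ℕ-compact if and only if every real ideal of the ring C(X, ℝ_disc) is fixed, where an ideal M of C(X, ℝ_disc) is real if the quotient ring C(X, ℝ_disc)/M is isomorphic as a ring to ℝ, and M is fixed if there exists p ∈ X with M = {f ∈ C(X, ℝ_disc) : f(p) = 0}. -/

import Mathlib

open Topology TopologicalSpace Set

universe u

/-- `X` is `E`-compact if it is homeomorphic to a closed subspace of a power `E^J`
for some nonempty index set `J`. -/
def IsECompact (E : Type*) (X : Type u)
    [TopologicalSpace E] [TopologicalSpace X] : Prop :=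
  ∃ (J : Type u) (_ : Nonempty J) (e : X → J → E),
    IsEmbedding e ∧ IsClosed (Set.range e)

namespace Stmt18Aux

open LocallyConstant

variable {X : Type u} [TopologicalSpace X]

/-! ### Helpers for the forward direction -/

lemma isUnit_of_ne_zero (f : LocallyConstant X ℝ) (hf : ∀ x, f x ≠ 0) : IsUnit f := by
  refine IsUnit.of_mul_eq_one (a := f) (LocallyConstant.map (·⁻¹) f) ?_
  ext x
  simp only [LocallyConstant.coe_mul, Pi.mul_apply, LocallyConstant.map_apply,
    Function.comp_apply, LocallyConstant.coe_one, Pi.one_apply]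
  exact mul_inv_cancel₀ (hf x)

lemma phi_const (φ : LocallyConstant X ℝ →+* ℝ) (c : ℝ) :
    φ (LocallyConstant.const X c) = c := by
  have h : φ.comp (LocallyConstant.constRingHom) = RingHom.id ℝ := Subsingleton.elim _ _
  have := congrArg (fun ψ : ℝ →+* ℝ => ψ c) h
  exact this

lemma fip [Nonempty X] (φ : LocallyConstant X ℝ →+* ℝ)
    (s : Finset (LocallyConstant X ℝ)) : ∃ x : X, ∀ f ∈ s, f x = φ f := by
  classical
  by_contra hc
  push_neg at hc
  set h : LocallyConstant X ℝ :=
    ∑ f ∈ s, (f - LocallyConstant.const X (φ f)) ^ 2 with hh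
  have hφh : φ h = 0 := by
    rw [hh, map_sum]
    refine Finset.sum_eq_zero fun f hf => ?_
    rw [map_pow, map_sub, phi_const]
    simp
  have hpos : ∀ x, h x ≠ 0 := by
    intro x
    have hx : h x = ∑ f ∈ s, (f x - φ f) ^ 2 := by
      calc h x = (LocallyConstant.evalRingHom x) h := rfl
        _ = ∑ f ∈ s, (LocallyConstant.evalRingHom x)
              ((f - LocallyConstant.const X (φ f)) ^ 2) := by rw [hh, map_sum]
        _ = ∑ f ∈ s, (f x - φ f) ^ 2 := by
              refine Finset.sum_congr rfl fun f _ => ?_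
              rw [map_pow, map_sub]
              rfl
    obtain ⟨f, hfs, hfx⟩ := hc x
    have hlt : (0 : ℝ) < ∑ f ∈ s, (f x - φ f) ^ 2 :=
      Finset.sum_pos' (fun g _ => sq_nonneg _)
        ⟨f, hfs, sq_pos_of_ne_zero (sub_ne_zero.mpr hfx)⟩
    rw [hx]; exact ne_of_gt hlt
  have := (isUnit_of_ne_zero h hpos).map φ
  rw [hφh] at this
  exact not_isUnit_zero this

/-! ### Helpers for the backward direction -/

variable (q : LocallyConstant X ℕ → ℕ)
  (hq : q ∈ closure (Set.range (fun (x : X) (g : LocallyConstant X ℕ) => g x)))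

include hq in
lemma exists_point (s : Finset (LocallyConstant X ℕ)) :
    ∃ x : X, ∀ g ∈ s, g x = q g := by
  have hS : {r : LocallyConstant X ℕ → ℕ | ∀ g ∈ s, r g = q g} ∈ 𝓝 q := by
    have heq : {r : LocallyConstant X ℕ → ℕ | ∀ g ∈ s, r g = q g}
        = ⋂ g ∈ s, (fun r : LocallyConstant X ℕ → ℕ => r g) ⁻¹' {q g} := by
      ext r; simp
    rw [heq]
    refine (isOpen_biInter_finset fun g _ => ?_).mem_nhds (by simp)
    exact (continuous_apply g).isOpen_preimage _ (isOpen_discrete _)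
  obtain ⟨r, hrS, x, hx⟩ := mem_closure_iff_nhds.mp hq _ hS
  exact ⟨x, fun g hg => (congrFun hx g).trans (hrS g hg)⟩

include hq in
lemma pair_lc (g g' : LocallyConstant X ℕ) :
    ∃ g'' : LocallyConstant X ℕ, ∀ x : X, g'' x = q g'' → g x = q g ∧ g' x = q g' := by
  classical
  set g'' : LocallyConstant X ℕ :=
    ⟨fun x => Nat.pair (g x) (g' x),
      (g.isLocallyConstant.comp₂ g'.isLocallyConstant Nat.pair)⟩ with hg''
  have hval : q g'' = Nat.pair (q g) (q g') := by
    obtain ⟨x, hx⟩ := exists_point q hq {g, g', g''}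
    have h1 := hx g (by simp)
    have h2 := hx g' (by simp)
    have h3 := hx g'' (by simp)
    rw [← h3, ← h1, ← h2]
    rfl
  refine ⟨g'', fun x hx => ?_⟩
  have : Nat.pair (g x) (g' x) = Nat.pair (q g) (q g') := by
    rw [← hval, ← hx]; rfl
  exact ⟨(Nat.pair_eq_pair.mp this).1, (Nat.pair_eq_pair.mp this).2⟩

lemma exists_beta : ∃ β : ℝ → ℕ → Bool, Function.Injective β := by
  obtain ⟨u, hu⟩ := exists_surjective_nat ℚ
  refine ⟨fun r n => decide ((u n : ℝ) < r), fun r r' hrr => ?_⟩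
  by_contra hne
  rcases lt_or_gt_of_ne hne with hlt | hlt
  · obtain ⟨p, hp1, hp2⟩ := exists_rat_btwn hlt
    obtain ⟨n, rfl⟩ := hu p
    have h2 : decide ((u n : ℝ) < r) = decide ((u n : ℝ) < r') := congrFun hrr n
    rw [decide_eq_decide] at h2
    exact lt_asymm hp1 (h2.mpr hp2)
  · obtain ⟨p, hp1, hp2⟩ := exists_rat_btwn hlt
    obtain ⟨n, rfl⟩ := hu p
    have h2 : decide ((u n : ℝ) < r) = decide ((u n : ℝ) < r') := congrFun hrr n
    rw [decide_eq_decide] at h2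
    exact lt_asymm hp1 (h2.mp hp2)

include hq in
lemma exists_val (f : LocallyConstant X ℝ) :
    ∃ c : ℝ, ∃ g : LocallyConstant X ℕ, ∀ x, g x = q g → f x = c := by
  classical
  obtain ⟨β, hβ⟩ := exists_beta
  set gn : ℕ → LocallyConstant X ℕ :=
    fun n => LocallyConstant.map (fun r => if β r n then 1 else 0) f with hgn
  set ε : ℕ → ℕ := fun n => q (gn n) with hε
  set H : ℝ → ℕ := fun r =>
    if hr : ∃ n, (if β r n then 1 else 0) ≠ ε n then Nat.find hr + 1 else 0 with hH
  set h : LocallyConstant X ℕ := LocallyConstant.map H f with hhdef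
  have happ : ∀ x : X, h x =
      if hr : ∃ n, (if β (f x) n then 1 else 0) ≠ ε n then Nat.find hr + 1 else 0 :=
    fun x => rfl
  have hgnapp : ∀ n x, gn n x = (if β (f x) n then 1 else 0) := fun n x => rfl
  rcases hm : q h with _ | n
  · -- q h = 0 : h is the witness
    obtain ⟨x₀, hx₀⟩ := exists_point q hq {h}
    have hx₀' : h x₀ = 0 := by rw [hx₀ h (by simp), hm]
    have key : ∀ y : X, h y = 0 → ∀ n, (if β (f y) n then 1 else 0) = ε n := by
      intro y hy n
      rw [happ] at hy
      by_contra hbad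
      have hex : ∃ n, (if β (f y) n then 1 else 0) ≠ ε n := ⟨n, hbad⟩
      simp only [dif_pos hex] at hy
      exact Nat.succ_ne_zero _ hy
    refine ⟨f x₀, h, fun x hx => ?_⟩
    have hx0 : h x = 0 := by rw [hx, hm]
    have hbx : β (f x) = β (f x₀) := by
      funext n
      have e1 := key x hx0 n
      have e2 := key x₀ hx₀' n
      by_contra hne
      rcases Bool.eq_false_or_eq_true (β (f x) n) with hb | hb <;>
        rcases Bool.eq_false_or_eq_true (β (f x₀) n) with hb' | hb' <;>
          simp [hb, hb'] at hne e1 e2 <;> omega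
    exact hβ hbx
  · -- q h = n + 1 : impossible
    exfalso
    obtain ⟨x, hx⟩ := exists_point q hq {h, gn n}
    have hhx : h x = n + 1 := by rw [hx h (by simp), hm]
    have hgnx : gn n x = ε n := by rw [hx (gn n) (by simp)]
    rw [happ] at hhx
    by_cases hex : ∃ m, (if β (f x) m then 1 else 0) ≠ ε m
    · rw [dif_pos hex] at hhx
      have hfind : Nat.find hex = n := by omega
      have := Nat.find_spec hex
      rw [hfind] at this
      exact this (by rw [← hgnapp n x, hgnx])
    · rw [dif_neg hex] at hhx
      exact Nat.succ_ne_zero n hhx.symm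

include hq in
lemma val_unique {f : LocallyConstant X ℝ} {c c' : ℝ} {g g' : LocallyConstant X ℕ}
    (hg : ∀ x, g x = q g → f x = c) (hg' : ∀ x, g' x = q g' → f x = c') : c = c' := by
  classical
  obtain ⟨x, hx⟩ := exists_point q hq {g, g'}
  rw [← hg x (hx g (by simp)), ← hg' x (hx g' (by simp))]

/-- The value of `f` along the "ultrafilter" determined by `q`. -/
noncomputable def Phi (f : LocallyConstant X ℝ) : ℝ :=
  (exists_val q hq f).choose

lemma Phi_spec (f : LocallyConstant X ℝ) :
    ∃ g : LocallyConstant X ℕ, ∀ x, g x = q g → f x = Phi q hq f :=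
  (exists_val q hq f).choose_spec

lemma Phi_eq {f : LocallyConstant X ℝ} {c : ℝ} {g : LocallyConstant X ℕ}
    (hg : ∀ x, g x = q g → f x = c) : Phi q hq f = c := by
  obtain ⟨g', hg'⟩ := Phi_spec q hq f
  exact val_unique q hq hg' hg

/-- `Phi` as a ring homomorphism. -/
noncomputable def PhiHom : LocallyConstant X ℝ →+* ℝ where
  toFun := Phi q hq
  map_one' := Phi_eq q hq (g := 1) (fun x _ => rfl)
  map_zero' := Phi_eq q hq (g := 1) (fun x _ => rfl)
  map_mul' := by
    intro a b
    obtain ⟨ga, hga⟩ := Phi_spec q hq a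
    obtain ⟨gb, hgb⟩ := Phi_spec q hq b
    obtain ⟨g'', hg''⟩ := pair_lc q hq ga gb
    refine Phi_eq q hq (g := g'') fun x hx => ?_
    obtain ⟨h1, h2⟩ := hg'' x hx
    show a x * b x = _
    rw [hga x h1, hgb x h2]
  map_add' := by
    intro a b
    obtain ⟨ga, hga⟩ := Phi_spec q hq a
    obtain ⟨gb, hgb⟩ := Phi_spec q hq b
    obtain ⟨g'', hg''⟩ := pair_lc q hq ga gb
    refine Phi_eq q hq (g := g'') fun x hx => ?_
    obtain ⟨h1, h2⟩ := hg'' x hx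
    show a x + b x = _
    rw [hga x h1, hgb x h2]

lemma PhiHom_surjective : Function.Surjective (PhiHom q hq) := by
  intro c
  exact ⟨LocallyConstant.const X c, Phi_eq q hq (g := 1) (fun x _ => rfl)⟩

end Stmt18Aux

open Stmt18Aux

/-- A nonempty zero-dimensional `T₁` space `X` is `ℕ`-compact if and only if every
real ideal `M` of the ring `C(X, ℝ_disc)` of locally constant real-valued functions
on `X` (i.e. every ideal whose quotient ring is isomorphic to `ℝ`) is fixed, that
is, of the form `{f : f p = 0}` for some point `p ∈ X`. -/
theorem stmt18 {X : Type u} [TopologicalSpace X] [Nonempty X] [T1Space X]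
    (hzd : IsTopologicalBasis {s : Set X | IsClopen s}) :
    IsECompact ℕ X ↔
    ∀ M : Ideal (LocallyConstant X ℝ),
      Nonempty ((LocallyConstant X ℝ ⧸ M) ≃+* ℝ) →
      ∃ p : X, ∀ f : LocallyConstant X ℝ, f ∈ M ↔ f p = 0 := by
  constructor
  · rintro ⟨J, hJ, e, hemb, hcl⟩ M ⟨ψ⟩
    classical
    set φ : LocallyConstant X ℝ →+* ℝ := ψ.toRingHom.comp (Ideal.Quotient.mk M) with hφ
    have hmem : ∀ f : LocallyConstant X ℝ, f ∈ M ↔ φ f = 0 := by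
      intro f
      constructor
      · intro hf
        show ψ (Ideal.Quotient.mk M f) = 0
        rw [Ideal.Quotient.eq_zero_iff_mem.mpr hf, map_zero]
      · intro hf
        have : ψ (Ideal.Quotient.mk M f) = ψ 0 := by rw [map_zero]; exact hf
        exact Ideal.Quotient.eq_zero_iff_mem.mp (ψ.injective this)
    have hclemb : IsClosedEmbedding e := ⟨hemb, hcl⟩
    -- coordinate functions
    have hcont : ∀ j : J, Continuous fun x : X => e x j :=
      fun j => (continuous_apply j).comp hemb.continuous
    set fj : J → LocallyConstant X ℝ := fun j =>
      ⟨fun x => ((e x j : ℕ) : ℝ),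
        ((IsLocallyConstant.iff_continuous _).mpr (hcont j)).comp (Nat.cast : ℕ → ℝ)⟩ with hfj
    -- the candidate point of ℕ^J
    have hqex : ∀ j : J, ∃ m : ℕ, (m : ℝ) = φ (fj j) := by
      intro j
      obtain ⟨x, hx⟩ := fip φ {fj j}
      exact ⟨e x j, hx (fj j) (by simp)⟩
    choose q hqspec using hqex
    -- key claim
    have key : ∀ f : LocallyConstant X ℝ, ∃ x : X, e x = q ∧ f x = φ f := by
      intro f
      have hCcl : IsClosed (e '' (⇑f ⁻¹' {φ f})) :=
        hclemb.isClosedMap _ (isClosed_singleton.preimage f.continuous)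
      have hqC : q ∈ closure (e '' (⇑f ⁻¹' {φ f})) := by
        rw [mem_closure_iff_nhds]
        intro t ht
        rw [nhds_pi, Filter.mem_pi] at ht
        obtain ⟨I, hIfin, tS, htS, hsub⟩ := ht
        obtain ⟨x, hx⟩ := fip φ (insert f (hIfin.toFinset.image fj))
        have hfx : f x = φ f := hx f (Finset.mem_insert_self _ _)
        have hcoord : ∀ j ∈ I, e x j = q j := by
          intro j hj
          have hmemI : fj j ∈ insert f (hIfin.toFinset.image fj) :=
            Finset.mem_insert_of_mem (Finset.mem_image_of_mem fj (hIfin.mem_toFinset.mpr hj))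
          have : ((e x j : ℕ) : ℝ) = φ (fj j) := hx (fj j) hmemI
          exact Nat.cast_injective (this.trans (hqspec j).symm)
        refine ⟨e x, hsub ?_, Set.mem_image_of_mem e hfx⟩
        intro j hj
        rw [hcoord j hj]
        exact mem_of_mem_nhds (htS j)
      rw [hCcl.closure_eq] at hqC
      obtain ⟨x, hxf, hxe⟩ := hqC
      exact ⟨x, hxe, hxf⟩
    obtain ⟨p, hp, -⟩ := key 0
    refine ⟨p, fun f => ?_⟩
    obtain ⟨x, hxq, hxf⟩ := key f
    have hxp : x = p := hemb.injective (hxq.trans hp.symm)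
    rw [hmem f, ← hxp, hxf]
  · intro hM
    classical
    set e : X → LocallyConstant X ℕ → ℕ := fun x g => g x with he
    have hecont : Continuous e := continuous_pi fun g => g.continuous
    -- indicator functions from clopen sets
    have hembe : IsEmbedding e := by
      refine ⟨isInducing_iff_nhds.mpr fun x => le_antisymm ?_ ?_, ?_⟩
      · exact (hecont.tendsto x).le_comap
      · intro V hV
        obtain ⟨U, hU, hxU, hUV⟩ := hzd.mem_nhds_iff.mp hV
        have ht : (fun r : LocallyConstant X ℕ → ℕ => r (LocallyConstant.charFn ℕ hU)) ⁻¹'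
            {1} ∈ 𝓝 (e x) := by
          refine ((continuous_apply (LocallyConstant.charFn ℕ hU)).isOpen_preimage _
            (isOpen_discrete {1})).mem_nhds ?_
          show e x (LocallyConstant.charFn ℕ hU) ∈ ({1} : Set ℕ)
          exact Set.mem_singleton_iff.mpr
            ((LocallyConstant.charFn_eq_one (Y := ℕ) x hU).mpr hxU)
        refine Filter.mem_of_superset (Filter.preimage_mem_comap ht) ?_
        intro y hy
        have : LocallyConstant.charFn ℕ hU y = 1 := hy
        exact hUV ((LocallyConstant.charFn_eq_one (Y := ℕ) y hU).mp this)
      · intro x y hxy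
        by_contra hne
        have hyc : ({y}ᶜ : Set X) ∈ 𝓝 x :=
          (isOpen_compl_singleton).mem_nhds (by simpa using hne)
        obtain ⟨U, hU, hxU, hUy⟩ := hzd.mem_nhds_iff.mp hyc
        have h1 : e x (LocallyConstant.charFn ℕ hU) = 1 :=
          (LocallyConstant.charFn_eq_one (Y := ℕ) x hU).mpr hxU
        have h0 : e y (LocallyConstant.charFn ℕ hU) = 0 :=
          (LocallyConstant.charFn_eq_zero (Y := ℕ) y hU).mpr (fun hy => hUy hy rfl)
        rw [hxy] at h1
        rw [h1] at h0
        exact one_ne_zero h0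
    refine ⟨LocallyConstant X ℕ, ⟨1⟩, e, hembe, ?_⟩
    refine isClosed_of_closure_subset fun q hq => ?_
    obtain ⟨p, hp⟩ := hM (RingHom.ker (PhiHom q hq))
      ⟨RingHom.quotientKerEquivOfSurjective (PhiHom_surjective q hq)⟩
    refine ⟨p, funext fun g => ?_⟩
    set f : LocallyConstant X ℝ :=
      LocallyConstant.map (Nat.cast : ℕ → ℝ) g - LocallyConstant.const X (q g : ℝ) with hf
    have hΦf : PhiHom q hq f = 0 := by
      refine Phi_eq q hq (g := g) fun x hx => ?_
      show ((g x : ℕ) : ℝ) - (q g : ℝ) = 0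
      rw [hx, sub_self]
    have hfp : f p = 0 := (hp f).mp (by rwa [RingHom.mem_ker])
    have hcast : ((g p : ℕ) : ℝ) = (q g : ℝ) := by
      have h2 : ((g p : ℕ) : ℝ) - (q g : ℝ) = 0 := hfp
      linarith
    exact Nat.cast_injective hcast
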